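/- Let f : W → V be an injective linear map between finite-dimensional real vector spaces and let P ⊆ V be a polytope. If G is a nonempty face of the polytope f⁻¹(P), then there exists a face F of P such that G = f⁻¹(F). -/

import Mathlib

open Finset

theorem farkas_aux : ∀ (n : ℕ) (ι : Type u) [Fintype ι] (p : ι → Fin n → ℝ) (c : ι → ℝ),
    (∀ l : ι → ℝ, (∀ i, 0 ≤ l i) → ∑ i, l i • p i = 0 → ∑ i, l i * c i ≤ 0) →
    ∃ y : Fin n → ℝ, ∀ i, c i ≤ ∑ k, y k * p i k := by
  intro n
  induction n with
  | zero =>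
    intro ι _ p c hyp
    classical
    refine ⟨0, fun i => ?_⟩
    have h := hyp (fun j => if j = i then 1 else 0)
      (fun j => by split <;> norm_num)
      (Subsingleton.elim _ _)
    simp only [ite_mul, one_mul, zero_mul, Finset.sum_ite_eq', Finset.mem_univ, if_true] at h
    simpa using h
  | succ n IH =>
    intro ι _ p c hyp
    classical
      classical
      set t : ι → ℝ := fun i => p i 0 with ht
      set p' : ι → Fin n → ℝ := fun i => Fin.tail (p i) with hp'
      set q : ι ⊕ ι × ι → Fin n → ℝ := Sum.elim
          (fun i => if t i = 0 then p' i else 0)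
          (fun ij => if 0 < t ij.1 ∧ t ij.2 < 0 then t ij.1 • p' ij.2 - t ij.2 • p' ij.1 else 0)
        with hq
      set d : ι ⊕ ι × ι → ℝ := Sum.elim
          (fun i => if t i = 0 then c i else 0)
          (fun ij => if 0 < t ij.1 ∧ t ij.2 < 0 then t ij.1 * c ij.2 - t ij.2 * c ij.1 else 0)
        with hd
      have key : ∀ l' : ι ⊕ ι × ι → ℝ, (∀ m, 0 ≤ l' m) → ∑ m, l' m • q m = 0 →
          ∑ m, l' m * d m ≤ 0 := by
        intro l' hl' hsum
        set l : ι → ℝ := fun i =>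
          (if t i = 0 then l' (.inl i) else 0)
          + ∑ j, (if 0 < t i ∧ t j < 0 then -t j * l' (.inr (i, j)) else 0)
          + ∑ j, (if 0 < t j ∧ t i < 0 then t j * l' (.inr (j, i)) else 0) with hldef
        have hl : ∀ i, 0 ≤ l i := by
          intro i
          refine add_nonneg (add_nonneg ?_ ?_) ?_
          · split
            · exact hl' _
            · exact le_rfl
          · refine Finset.sum_nonneg fun j _ => ?_
            split
            · next h => exact mul_nonneg (by linarith [h.2]) (hl' _)
            · exact le_rfl
          · refine Finset.sum_nonneg fun j _ => ?_
            split
            · next h => exact mul_nonneg (by linarith [h.1]) (hl' _)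
            · exact le_rfl
        -- master expansion
        have hsumF : ∀ F : ι → ℝ, ∑ i, l i * F i =
            (∑ i, (if t i = 0 then l' (.inl i) * F i else 0))
            + ∑ i, ∑ j, (if 0 < t i ∧ t j < 0 then
                l' (.inr (i, j)) * (t i * F j - t j * F i) else 0) := by
          intro F
          have e1 : ∀ i, l i * F i =
              (if t i = 0 then l' (.inl i) * F i else 0)
              + (∑ j, (if 0 < t i ∧ t j < 0 then -t j * l' (.inr (i, j)) * F i else 0))
              + (∑ j, (if 0 < t j ∧ t i < 0 then t j * l' (.inr (j, i)) * F i else 0)) := by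
            intro i
            rw [hldef]
            dsimp only
            rw [add_mul, add_mul, Finset.sum_mul, Finset.sum_mul]
            congr 1
            · congr 1
              · rw [ite_mul, zero_mul]
              · exact Finset.sum_congr rfl fun j _ => by rw [ite_mul, zero_mul]
            · exact Finset.sum_congr rfl fun j _ => by rw [ite_mul, zero_mul]
          rw [Finset.sum_congr rfl fun i _ => e1 i]
          rw [Finset.sum_add_distrib, Finset.sum_add_distrib]
          rw [add_assoc]
          congr 1
          rw [Finset.sum_comm (f := fun i j => if 0 < t j ∧ t i < 0 then t j * l' (.inr (j, i)) * F i else 0)]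
          rw [← Finset.sum_add_distrib]
          refine Finset.sum_congr rfl fun i _ => ?_
          rw [← Finset.sum_add_distrib]
          refine Finset.sum_congr rfl fun j _ => ?_
          split
          · ring
          · rw [add_zero]
        -- coordinate sums of hsum
        have hsumk : ∀ k, ∑ m, l' m * q m k = 0 := by
          intro k
          have := congrFun hsum k
          simpa [Finset.sum_apply] using this
        have h0 : ∑ i, l i * t i = 0 := by
          rw [hsumF t]
          rw [Finset.sum_eq_zero, Finset.sum_eq_zero, add_zero]
          · intro i _
            rw [Finset.sum_eq_zero]
            intro j _
            split
            · ring
            · rfl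
          · intro i _
            split
            · next h => rw [h, mul_zero]
            · rfl
        have hk : ∀ k, ∑ i, l i * p' i k = 0 := by
          intro k
          rw [hsumF (fun i => p' i k)]
          have := hsumk k
          rw [Fintype.sum_sum_type, Fintype.sum_prod_type] at this
          refine Eq.trans ?_ this
          congr 1
          · refine Finset.sum_congr rfl fun i _ => ?_
            simp only [hq, Sum.elim_inl, ite_apply, Pi.zero_apply, mul_ite, mul_zero]
          · refine Finset.sum_congr rfl fun i _ => ?_
            refine Finset.sum_congr rfl fun j _ => ?_
            simp only [hq, Sum.elim_inr, ite_apply, Pi.zero_apply, Pi.sub_apply, Pi.smul_apply,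
              smul_eq_mul, mul_ite, mul_zero]
        have hcc : ∑ m, l' m * d m = ∑ i, l i * c i := by
          rw [hsumF c, Fintype.sum_sum_type, Fintype.sum_prod_type]
          congr 1
          · refine Finset.sum_congr rfl fun i _ => ?_
            simp only [hd, Sum.elim_inl, mul_ite, mul_zero]
          · refine Finset.sum_congr rfl fun i _ => ?_
            refine Finset.sum_congr rfl fun j _ => ?_
            simp only [hd, Sum.elim_inr, mul_ite, mul_zero]
        rw [hcc]
        refine hyp l hl ?_
        funext k
        rw [Finset.sum_apply]
        refine Fin.cases ?_ ?_ k
        · simpa [smul_eq_mul] using h0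
        · intro k'
          simpa [smul_eq_mul, hp', Fin.tail] using hk k'
      obtain ⟨y', hy'⟩ := IH _ q d key
      set dot : ι → ℝ := fun i => ∑ k, y' k * p' i k with hdot
      have hzero : ∀ i, t i = 0 → c i ≤ dot i := by
        intro i h
        have := hy' (.inl i)
        simpa [hq, hd, h] using this
      have hpair : ∀ i j, 0 < t i → t j < 0 → (c i - dot i) / t i ≤ (c j - dot j) / t j := by
        intro i j hi hj
        have hC : 0 < t i ∧ t j < 0 := ⟨hi, hj⟩
        have h := hy' (.inr (i, j))
        simp only [hq, hd, Sum.elim_inr, if_pos hC] at h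
        have hs : ∑ k, y' k * (t i • p' j - t j • p' i) k = t i * dot j - t j * dot i := by
          have : ∀ k, y' k * (t i • p' j - t j • p' i) k
              = t i * (y' k * p' j k) - t j * (y' k * p' i k) := by
            intro k
            simp only [Pi.sub_apply, Pi.smul_apply, smul_eq_mul]
            ring
          rw [Finset.sum_congr rfl fun k _ => this k, Finset.sum_sub_distrib,
            ← Finset.mul_sum, ← Finset.mul_sum]
        rw [hs] at h
        have hN : (c j - dot j) * t i - t j * (c i - dot i) ≤ 0 := by nlinarith
        have heq : (c j - dot j) / t j - (c i - dot i) / t i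
            = ((c j - dot j) * t i - t j * (c i - dot i)) / (t j * t i) :=
          div_sub_div _ _ (ne_of_lt hj) (ne_of_gt hi)
        have hden : t j * t i ≤ 0 := le_of_lt (mul_neg_of_neg_of_pos hj hi)
        have hpos := div_nonneg_of_nonpos hN hden
        rw [← heq] at hpos
        linarith
      -- choose the new coordinate s
      set A : Finset ℝ := (Finset.univ.filter (fun i => 0 < t i)).image (fun i => (c i - dot i) / t i) with hA
      set B : Finset ℝ := (Finset.univ.filter (fun i => t i < 0)).image (fun i => (c i - dot i) / t i) with hB
      have hAB : ∀ a ∈ A, ∀ b ∈ B, a ≤ b := by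
        intro a ha b hb
        simp only [hA, hB, Finset.mem_image, Finset.mem_filter, Finset.mem_univ, true_and] at ha hb
        obtain ⟨i, hi, rfl⟩ := ha
        obtain ⟨j, hj, rfl⟩ := hb
        exact hpair i j hi hj
      have hex : ∃ s : ℝ, (∀ a ∈ A, a ≤ s) ∧ (∀ b ∈ B, s ≤ b) := by
        by_cases hAne : A.Nonempty
        · refine ⟨A.max' hAne, fun a ha => Finset.le_max' _ _ ha, fun b hb => ?_⟩
          exact Finset.max'_le _ _ _ fun a ha => hAB a ha b hb
        · by_cases hBne : B.Nonempty
          · refine ⟨B.min' hBne, fun a ha => absurd ⟨a, ha⟩ hAne, fun b hb => Finset.min'_le _ _ hb⟩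
          · exact ⟨0, fun a ha => absurd ⟨a, ha⟩ hAne, fun b hb => absurd ⟨b, hb⟩ hBne⟩
      obtain ⟨s, hsA, hsB⟩ := hex
      refine ⟨(Fin.cons s y' : Fin (n+1) → ℝ), fun i => ?_⟩
      have hsum : ∑ k : Fin (n+1), (Fin.cons s y' : Fin (n+1) → ℝ) k * p i k = s * t i + dot i := by
        rw [Fin.sum_univ_succ]
        simp only [Fin.cons_zero, Fin.cons_succ]
        rfl
      rw [hsum]
      rcases lt_trichotomy (t i) 0 with hlt | heq | hgt
      · have hmem : (c i - dot i) / t i ∈ B := by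
          simp only [hB, Finset.mem_image, Finset.mem_filter, Finset.mem_univ, true_and]
          exact ⟨i, hlt, rfl⟩
        have := hsB _ hmem
        rw [le_div_iff_of_neg hlt] at this
        linarith
      · have := hzero i heq
        rw [heq]
        linarith
      · have hmem : (c i - dot i) / t i ∈ A := by
          simp only [hA, Finset.mem_image, Finset.mem_filter, Finset.mem_univ, true_and]
          exact ⟨i, hgt, rfl⟩
        have := hsA _ hmem
        rw [div_le_iff₀ hgt] at this
        linarith
open Set

variable {W V : Type*} [AddCommGroup W] [Module ℝ W] [AddCommGroup V] [Module ℝ V]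

/-- A polytope is the convex hull of finitely many points. -/
def IsPolytope (P : Set V) : Prop :=
  ∃ s : Finset V, P = convexHull ℝ (s : Set V)

/-- `F` is a face of the polytope `P`. -/
def IsFaceOf (P F : Set V) : Prop :=
  F = P ∨ ∃ f : V →ₗ[ℝ] ℝ, f ≠ 0 ∧ ∃ α : ℝ,
    (∀ x ∈ P, f x ≤ α) ∧ F = P ∩ {x | f x = α}

/-- Any linear functional bounded above on `f ⁻¹' P` by `α` via `g`, extends to a functional on
`V` agreeing with `g` on the image of `f` and bounded by `α` on `P`. -/
theorem exists_extension [FiniteDimensional ℝ W] [FiniteDimensional ℝ V]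
    (f : W →ₗ[ℝ] V) (hf : Function.Injective f) (s : Finset V)
    (g : W →ₗ[ℝ] ℝ) (α : ℝ) (hle : ∀ w, f w ∈ convexHull ℝ (s : Set V) → g w ≤ α) :
    ∃ H : V →ₗ[ℝ] ℝ, H.comp f = g ∧ ∀ x ∈ convexHull ℝ (s : Set V), H x ≤ α := by
  classical
  set n := Module.finrank ℝ V with hn
  set m := Module.finrank ℝ W with hm
  set b := Module.finBasis ℝ V with hb
  set bw := Module.finBasis ℝ W with hbw
  set ι := (Fin m ⊕ Fin m) ⊕ {x : V // x ∈ s} with hι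
  set vec : ι → Fin n → ℝ := Sum.elim
      (Sum.elim (fun j => b.equivFun (f (bw j))) (fun j => -b.equivFun (f (bw j))))
      (fun x => -b.equivFun x.1) with hvec
  set cst : ι → ℝ := Sum.elim
      (Sum.elim (fun j => g (bw j)) (fun j => -g (bw j))) (fun _ => -α) with hcst
  have hfark : ∀ l : ι → ℝ, (∀ i, 0 ≤ l i) → ∑ i, l i • vec i = 0 → ∑ i, l i * cst i ≤ 0 := by
    intro l hl hsum
    set ν : Fin m → ℝ := fun j => l (.inl (.inl j)) - l (.inl (.inr j)) with hν
    set μ : {x : V // x ∈ s} → ℝ := fun x => l (.inr x) with hμ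
    set w₀ : W := ∑ j, ν j • bw j with hw₀
    have hfw₀ : f w₀ = ∑ x : {x : V // x ∈ s}, μ x • x.1 := by
      have hv : b.equivFun (f w₀ - ∑ x : {x : V // x ∈ s}, μ x • x.1) = 0 := by
        have : b.equivFun (f w₀ - ∑ x : {x : V // x ∈ s}, μ x • x.1)
            = ∑ i, l i • vec i := by
          rw [Fintype.sum_sum_type, Fintype.sum_sum_type]
          simp only [hvec, Sum.elim_inl, Sum.elim_inr, smul_neg, map_sub, map_sum, map_smul, hw₀,
            hν, sub_smul]
          rw [Finset.sum_sub_distrib]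
          simp only [Finset.sum_neg_distrib, hμ]
          abel
        rw [this, hsum]
      have := b.equivFun.injective (by rw [hv, map_zero] : b.equivFun _ = b.equivFun 0)
      rw [sub_eq_zero] at this
      exact this
    have hM : (0:ℝ) ≤ ∑ x, μ x := Finset.sum_nonneg fun x _ => hl _
    have hgoal : ∑ i, l i * cst i = g w₀ - (∑ x, μ x) * α := by
      rw [Fintype.sum_sum_type, Fintype.sum_sum_type]
      simp only [hcst, Sum.elim_inl, Sum.elim_inr, mul_neg]
      have e1 : g w₀ = ∑ j, l (Sum.inl (Sum.inl j)) * g (bw j)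
          - ∑ j, l (Sum.inl (Sum.inr j)) * g (bw j) := by
        rw [hw₀, map_sum, ← Finset.sum_sub_distrib]
        refine Finset.sum_congr rfl fun j _ => ?_
        rw [map_smul, hν, smul_eq_mul]
        ring
      have e2 : ∑ x : {x : V // x ∈ s}, -(μ x * α) = -((∑ x, μ x) * α) := by
        rw [Finset.sum_neg_distrib, Finset.sum_mul]
      rw [e1, e2, Finset.sum_neg_distrib]
      ring
    rw [hgoal]
    rcases eq_or_lt_of_le hM with hM0 | hMpos
    · have hμ0 : ∀ x ∈ Finset.univ, μ x = 0 :=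
        (Finset.sum_eq_zero_iff_of_nonneg fun x _ => hl _).mp hM0.symm
      have hfw : f w₀ = 0 := by
        rw [hfw₀, Finset.sum_eq_zero fun x hx => by rw [hμ0 x hx, zero_smul]]
      have : w₀ = 0 := hf (by rw [hfw, map_zero])
      rw [this, map_zero, ← hM0]
      simp
    · have hmem : f ((∑ x, μ x)⁻¹ • w₀) ∈ convexHull ℝ (s : Set V) := by
        have : f ((∑ x, μ x)⁻¹ • w₀) = Finset.univ.centerMass μ (fun x : {x : V // x ∈ s} => x.1) := by
          rw [map_smul, hfw₀, Finset.centerMass]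
        rw [this]
        refine Finset.centerMass_mem_convexHull _ (fun x _ => hl _) hMpos fun x _ => x.2
      have := hle _ hmem
      rw [map_smul, smul_eq_mul] at this
      have h4 : g w₀ ≤ (∑ x, μ x) * α := by
        have := mul_le_mul_of_nonneg_left this (le_of_lt hMpos)
        rw [← mul_assoc, mul_inv_cancel₀ (ne_of_gt hMpos), one_mul] at this
        exact this
      linarith
  obtain ⟨y, hy⟩ := farkas_aux n ι vec cst hfark
  refine ⟨b.constr ℝ y, ?_, ?_⟩
  · have hHx : ∀ x : V, (b.constr ℝ y) x = ∑ k, y k * b.equivFun x k := by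
      intro x
      rw [Module.Basis.constr_apply_fintype]
      exact Finset.sum_congr rfl fun k _ => by rw [smul_eq_mul, mul_comm]
    refine Module.Basis.ext bw fun j => ?_
    have h1 := hy (.inl (.inl j))
    have h2 := hy (.inl (.inr j))
    simp only [hvec, hcst, Sum.elim_inl, Sum.elim_inr, Pi.neg_apply, mul_neg] at h1 h2
    rw [Finset.sum_neg_distrib] at h2
    rw [LinearMap.comp_apply, hHx]
    linarith
  · intro x hx
    have hconv : Convex ℝ {x : V | (b.constr ℝ y) x ≤ α} :=
      convex_halfSpace_le (LinearMap.isLinear _) α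
    refine convexHull_min ?_ hconv hx
    intro z hz
    have h3 := hy (.inr ⟨z, hz⟩)
    simp only [hvec, hcst, Sum.elim_inr, Pi.neg_apply, mul_neg] at h3
    rw [Finset.sum_neg_distrib] at h3
    have hHx : (b.constr ℝ y) z = ∑ k, y k * b.equivFun z k := by
      rw [Module.Basis.constr_apply_fintype]
      exact Finset.sum_congr rfl fun k _ => by rw [smul_eq_mul, mul_comm]
    simp only [mem_setOf_eq, hHx]
    linarith

/-- If `f : W → V` is an injective linear map, `P ⊆ V` a polytope and `G` a
nonempty face of `f⁻¹(P)`, then `G = f⁻¹(F)` for some face `F` of `P`. -/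
theorem face_of_preimage [FiniteDimensional ℝ W] [FiniteDimensional ℝ V]
    (f : W →ₗ[ℝ] V) (hf : Function.Injective f) {P : Set V} (hP : IsPolytope P)
    {G : Set W} (hG : IsFaceOf (f ⁻¹' P) G) (hGne : G.Nonempty) :
    ∃ F : Set V, IsFaceOf P F ∧ G = f ⁻¹' F := by
  obtain ⟨s, rfl⟩ := hP
  rcases hG with hG | ⟨g, hg0, α, hle, hGeq⟩
  · exact ⟨convexHull ℝ (s : Set V), Or.inl rfl, hG⟩
  obtain ⟨H, hcomp, hHle⟩ := exists_extension f hf s g α (fun w hw => hle w hw)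
  have hHne : H ≠ 0 := by
    intro h0
    apply hg0
    rw [← hcomp, h0, LinearMap.zero_comp]
  refine ⟨convexHull ℝ (s : Set V) ∩ {x | H x = α}, Or.inr ⟨H, hHne, α, hHle, rfl⟩, ?_⟩
  rw [hGeq]
  ext w
  simp only [mem_inter_iff, Set.mem_preimage, mem_setOf_eq]
  constructor
  · rintro ⟨h1, h2⟩
    refine ⟨h1, ?_⟩
    rw [← h2, ← hcomp]
    rfl
  · rintro ⟨h1, h2⟩
    refine ⟨h1, ?_⟩
    rw [← h2, ← hcomp]
    rfl
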